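/- Every continuous piecewise affine function f: ℝ^m → ℝ^n can be obtained as a linear map of the unique solution of a multiparametric linear program: there exist a dimension n̂ ≤ 2n, a linear objective J(z,x) = c·z, a polyhedral set Ω ⊆ ℝ^{n̂} × ℝ^m (defined by finitely many affine inequalities in (z,x)), and a linear map T: ℝ^{n̂} → ℝ^n such that for every x ∈ ℝ^m the minimizer f̂(x) = argmin_{z : (z,x) ∈ Ω} c·z exists and is unique, and f(x) = T f̂(x). -/
import Mathlib


open Matrix

/-- A convex polyhedron in `ℝ^m`: a finite intersection of closed half-spaces. -/
def IsPolyhedron {m : ℕ} (P : Set (Fin m → ℝ)) : Prop :=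
  ∃ (k : ℕ) (a : Fin k → Fin m → ℝ) (c : Fin k → ℝ), P = {x | ∀ i, a i ⬝ᵥ x ≤ c i}

/-- A continuous piecewise affine function `ℝ^m → ℝ^n`: continuous, and there is a finite
collection of convex polyhedra covering `ℝ^m` on each of which `f` is affine. -/
def IsCPWAVec {m n : ℕ} (f : (Fin m → ℝ) → (Fin n → ℝ)) : Prop :=
  Continuous f ∧ ∃ (M : ℕ) (P : Fin M → Set (Fin m → ℝ)),
    (∀ i, IsPolyhedron (P i)) ∧ (⋃ i, P i) = Set.univ ∧
    ∀ i, ∃ (A : Matrix (Fin n) (Fin m) ℝ) (d : Fin n → ℝ),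
      ∀ x ∈ P i, f x = A.mulVec x + d


section Aux
variable {m : ℕ}

lemma continuous_dot (a : Fin m → ℝ) : Continuous fun x : Fin m → ℝ => a ⬝ᵥ x :=
  continuous_finset_sum _ fun i _ => continuous_const.mul (continuous_apply i)

lemma isLinearMap_dot (a : Fin m → ℝ) : IsLinearMap ℝ fun x : Fin m → ℝ => a ⬝ᵥ x :=
  ⟨fun x y => dotProduct_add a x y, fun c x => by
    simp [dotProduct, Finset.mul_sum, mul_left_comm]⟩


lemma IsPolyhedron.isClosed {P : Set (Fin m → ℝ)} (h : IsPolyhedron P) : IsClosed P := by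
  obtain ⟨k, a, c, rfl⟩ := h
  have : {x : Fin m → ℝ | ∀ i, a i ⬝ᵥ x ≤ c i} = ⋂ i, {x | a i ⬝ᵥ x ≤ c i} := by
    ext x; simp
  rw [this]
  exact isClosed_iInter fun i => isClosed_le (continuous_dot (a i)) continuous_const

lemma IsPolyhedron.convex {P : Set (Fin m → ℝ)} (h : IsPolyhedron P) : Convex ℝ P := by
  obtain ⟨k, a, c, rfl⟩ := h
  have : {x : Fin m → ℝ | ∀ i, a i ⬝ᵥ x ≤ c i} = ⋂ i, {x | a i ⬝ᵥ x ≤ c i} := by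
    ext x; simp
  rw [this]
  exact convex_iInter fun i => convex_halfSpace_le (isLinearMap_dot (a i)) (c i)

/-- `g` is a pointwise maximum of finitely many affine functions. -/
def IsMaxAff {m : ℕ} (g : (Fin m → ℝ) → ℝ) : Prop :=
  ∃ (k : ℕ) (a : Fin (k+1) → Fin m → ℝ) (b : Fin (k+1) → ℝ),
    ∀ x, IsGreatest (Set.range fun i => a i ⬝ᵥ x + b i) (g x)

lemma isMaxAff_of_family {ι : Type} [Fintype ι] [Nonempty ι] (a : ι → Fin m → ℝ) (b : ι → ℝ)
    (g : (Fin m → ℝ) → ℝ)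
    (hg : ∀ x, IsGreatest (Set.range fun i => a i ⬝ᵥ x + b i) (g x)) : IsMaxAff g := by
  obtain ⟨k, hk⟩ : ∃ k, Fintype.card ι = k + 1 :=
    Nat.exists_eq_succ_of_ne_zero (Fintype.card_ne_zero)
  set e : Fin (k+1) ≃ ι := (finCongr hk.symm).trans (Fintype.equivFin ι).symm with he
  refine ⟨k, fun i => a (e i), fun i => b (e i), fun x => ?_⟩
  have heq : (Set.range fun i : Fin (k+1) => a (e i) ⬝ᵥ x + b (e i))
      = Set.range fun i : ι => a i ⬝ᵥ x + b i :=
    Function.Surjective.range_comp e.surjective (fun i : ι => a i ⬝ᵥ x + b i)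
  rw [heq]; exact hg x

end Aux

section Aux2
variable {m : ℕ}

lemma sum_dot {m : ℕ} {ι : Type} [Fintype ι] (v : ι → Fin m → ℝ) (x : Fin m → ℝ) :
    (∑ i, v i) ⬝ᵥ x = ∑ i, v i ⬝ᵥ x := by
  simp only [dotProduct, Finset.sum_apply, Finset.sum_mul]
  exact Finset.sum_comm

lemma isMaxAff_congr {g g' : (Fin m → ℝ) → ℝ} (h : ∀ x, g x = g' x) (hg : IsMaxAff g) :
    IsMaxAff g' := by
  obtain ⟨k, a, b, hk⟩ := hg
  exact ⟨k, a, b, fun x => (h x) ▸ hk x⟩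

lemma isMaxAff_affine (a : Fin m → ℝ) (b : ℝ) : IsMaxAff (fun x => a ⬝ᵥ x + b) :=
  ⟨0, fun _ => a, fun _ => b, fun x => ⟨⟨0, rfl⟩, by rintro y ⟨i, rfl⟩; exact le_rfl⟩⟩

/-- max over a finite nonempty family of max-affine functions is max-affine -/
lemma isMaxAff_sup_family {ι : Type} [Fintype ι] [Nonempty ι] (e : ι → (Fin m → ℝ) → ℝ)
    (he : ∀ i, IsMaxAff (e i)) (g : (Fin m → ℝ) → ℝ)
    (hg : ∀ x, IsGreatest (Set.range fun i => e i x) (g x)) : IsMaxAff g := by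
  choose k a b hab using he
  haveI : Nonempty (Σ i : ι, Fin (k i + 1)) := ⟨⟨Classical.arbitrary ι, 0⟩⟩
  refine isMaxAff_of_family (ι := Σ i : ι, Fin (k i + 1)) (fun p => a p.1 p.2)
    (fun p => b p.1 p.2) g (fun x => ?_)
  constructor
  · obtain ⟨i, hi⟩ := (hg x).1
    obtain ⟨t, ht⟩ := (hab i x).1
    exact ⟨⟨i, t⟩, ht.trans hi⟩
  · rintro y ⟨⟨i, t⟩, rfl⟩
    exact le_trans ((hab i x).2 ⟨t, rfl⟩) ((hg x).2 ⟨i, rfl⟩)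

/-- sum over a finite family of max-affine functions is max-affine -/
lemma isMaxAff_sum_family {ι : Type} [Fintype ι] (e : ι → (Fin m → ℝ) → ℝ)
    (he : ∀ i, IsMaxAff (e i)) : IsMaxAff (fun x => ∑ i, e i x) := by
  choose k a b hab using he
  haveI := Classical.decEq ι
  refine isMaxAff_of_family (ι := ∀ i : ι, Fin (k i + 1)) (fun σ => ∑ i, a i (σ i))
    (fun σ => ∑ i, b i (σ i)) _ (fun x => ?_)
  have hdot : ∀ σ : ∀ i : ι, Fin (k i + 1),
      (∑ i, a i (σ i)) ⬝ᵥ x + ∑ i, b i (σ i) = ∑ i, (a i (σ i) ⬝ᵥ x + b i (σ i)) := by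
    intro σ
    rw [Finset.sum_add_distrib, sum_dot (fun i => a i (σ i)) x]
  constructor
  · have : ∀ i : ι, ∃ t : Fin (k i + 1), a i t ⬝ᵥ x + b i t = e i x := by
      intro i; obtain ⟨t, ht⟩ := (hab i x).1; exact ⟨t, ht⟩
    choose σ hσ using this
    refine ⟨σ, ?_⟩
    show (∑ i, a i (σ i)) ⬝ᵥ x + ∑ i, b i (σ i) = ∑ i, e i x
    rw [hdot σ]; exact Finset.sum_congr rfl fun i _ => hσ i
  · rintro y ⟨σ, rfl⟩
    show (∑ i, a i (σ i)) ⬝ᵥ x + ∑ i, b i (σ i) ≤ ∑ i, e i x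
    rw [hdot σ]
    exact Finset.sum_le_sum fun i _ => (hab i x).2 ⟨σ i, rfl⟩

lemma isMaxAff_add {g h : (Fin m → ℝ) → ℝ} (hg : IsMaxAff g) (hh : IsMaxAff h) :
    IsMaxAff (fun x => g x + h x) := by
  have := isMaxAff_sum_family (ι := Bool) (fun i => if i then g else h)
    (by intro i; cases i <;> simpa)
  refine isMaxAff_congr (fun x => ?_) this
  rw [Fintype.sum_bool]
  simp
end Aux2

section Key
variable {m M : ℕ}

lemma affine_nonneg_at_zero (u v t0 s : ℝ) (h0 : 0 ≤ t0) (hts : t0 < s)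
    (h1 : 0 ≤ u + t0*v) (h2 : u + s*v < 0) : 0 ≤ u := by
  nlinarith [mul_nonneg h0 (le_of_lt (show 0 < -v by nlinarith))]

/-- Key lemma (Ovchinnikov-type): for a continuous function `f` that agrees with affine
functions `ℓ i` on closed convex pieces covering the space, for any two points `x p` there
is an index `i` with `ℓ i x ≤ f x` and `f p ≤ ℓ i p`. -/
lemma key_segment (P : Fin M → Set (Fin m → ℝ)) (hPcl : ∀ i, IsClosed (P i))
    (hPcv : ∀ i, Convex ℝ (P i)) (hcov : (⋃ i, P i) = Set.univ)
    (a : Fin M → Fin m → ℝ) (c : Fin M → ℝ) (f : (Fin m → ℝ) → ℝ) (hf : Continuous f)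
    (haff : ∀ i, ∀ y ∈ P i, f y = a i ⬝ᵥ y + c i) (x p : Fin m → ℝ) :
    ∃ i, a i ⬝ᵥ x + c i ≤ f x ∧ f p ≤ a i ⬝ᵥ p + c i := by
  classical
  -- the segment
  set pt : ℝ → (Fin m → ℝ) := fun t => x + t • (p - x) with hpt
  have hptcont : Continuous pt := by fun_prop
  have hpt0 : pt 0 = x := by simp [hpt]
  have hpt1 : pt 1 = p := by simp [hpt]
  have hcov' : ∀ y : Fin m → ℝ, ∃ i, y ∈ P i := by
    intro y
    have : y ∈ ⋃ i, P i := hcov ▸ Set.mem_univ y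
    simpa using this
  -- affine functions along the segment
  set α : Fin M → ℝ := fun i => a i ⬝ᵥ x + c i with hα
  set β : Fin M → ℝ := fun i => a i ⬝ᵥ (p - x) with hβ
  have hφ : ∀ i t, a i ⬝ᵥ pt t + c i = α i + t * β i := by
    intro i t
    simp only [hpt, hα, hβ, dotProduct_add, dotProduct_smul, smul_eq_mul]
    ring
  have hg : ∀ i t, pt t ∈ P i → f (pt t) = α i + t * β i := by
    intro i t ht
    rw [haff i _ ht, hφ]
  -- pieces pulled back to the line
  set I : Fin M → Set ℝ := fun i => pt ⁻¹' (P i) with hI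
  have hIcl : ∀ i, IsClosed (I i) := fun i => (hPcl i).preimage hptcont
  have hIcv : ∀ i, Convex ℝ (I i) := by
    intro i t1 ht1 t2 ht2 l u hl hu hlu
    show pt (l * t1 + u * t2) ∈ P i
    have : pt (l * t1 + u * t2) = l • pt t1 + u • pt t2 := by
      show x + (l * t1 + u * t2) • (p - x) = l • (x + t1 • (p - x)) + u • (x + t2 • (p - x))
      have h1 : l • (x + t1 • (p - x)) + u • (x + t2 • (p - x))
          = (l + u) • x + (l * t1 + u * t2) • (p - x) := by module
      rw [h1, hlu, one_smul]
    rw [this]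
    exact hPcv i ht1 ht2 hl hu hlu
  -- a small interval to the right of any t < 1 inside one piece
  have hstep : ∀ t : ℝ, 0 ≤ t → t < 1 → ∃ i ε, 0 < ε ∧ t + ε ≤ 1 ∧ Set.Icc t (t + ε) ⊆ I i := by
    intro t ht0 ht1
    have h1t : (0:ℝ) < 1 - t := by linarith
    set s : ℕ → ℝ := fun n => t + (1 - t) / (n + 2) with hs
    have hspos : ∀ n : ℕ, t < s n := by
      intro n
      have : (0:ℝ) < (1 - t) / (n + 2) := div_pos h1t (by positivity)
      simp [hs]; linarith
    have hsle : ∀ n : ℕ, s n ≤ 1 := by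
      intro n
      have h2 : (1:ℝ) ≤ (n:ℝ) + 2 := by
        have := Nat.cast_nonneg (α := ℝ) n; linarith
      have : (1 - t) / (n + 2) ≤ (1 - t) := by
        rw [div_le_iff₀ (by positivity)]
        nlinarith [Nat.cast_nonneg (α := ℝ) n]
      simp [hs]; linarith
    choose σ hσ using fun n : ℕ => hcov' (pt (s n))
    obtain ⟨i, hi⟩ := Finite.exists_infinite_fiber σ
    have hiN : (σ ⁻¹' {i}).Infinite := Set.infinite_coe_iff.mp hi
    have hmemI : ∀ n ∈ σ ⁻¹' {i}, s n ∈ I i := by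
      intro n hn
      have : σ n = i := hn
      exact this ▸ hσ n
    -- t is in the closed set I i
    have htI : t ∈ I i := by
      rw [← (hIcl i).closure_eq]
      rw [Metric.mem_closure_iff]
      intro ε hε
      obtain ⟨n, hn, hngt⟩ := hiN.exists_gt ⌈(1 - t) / ε⌉₊
      refine ⟨s n, hmemI n hn, ?_⟩
      have h1 : dist t (s n) = (1 - t) / (n + 2) := by
        rw [Real.dist_eq]
        rw [show t - s n = -((1 - t) / (n + 2)) by simp only [hs]; ring]
        rw [abs_neg, abs_of_pos (div_pos h1t (by positivity))]
      rw [h1, div_lt_iff₀ (by positivity)]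
      have h2 : (1 - t) / ε < (n:ℝ) + 2 := by
        calc (1 - t) / ε ≤ (⌈(1 - t) / ε⌉₊ : ℝ) := Nat.le_ceil _
        _ < (n:ℝ) + 2 := by
            have : (⌈(1 - t) / ε⌉₊ : ℝ) < (n:ℝ) := by exact_mod_cast hngt
            linarith
      calc 1 - t = ((1 - t)/ε) * ε := by field_simp
      _ < ((n:ℝ) + 2) * ε := by
          apply mul_lt_mul_of_pos_right h2 hε
      _ = ε * ((n:ℝ) + 2) := by ring
    obtain ⟨n0, hn0, _⟩ := hiN.exists_gt 0
    refine ⟨i, (1 - t) / (n0 + 2), div_pos h1t (by positivity), by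
      have := hsle n0; simpa [hs] using this, ?_⟩
    have hseg : Set.Icc t (t + (1 - t) / (n0 + 2)) ⊆ I i := by
      have h2 : t + (1 - t) / (n0 + 2) ∈ I i := by
        have := hmemI n0 hn0; simpa [hs] using this
      exact (hIcv i).ordConnected.out htI h2
    exact hseg
  -- the sup argument
  set A : Set ℝ := {t | t ∈ Set.Icc (0:ℝ) 1 ∧ ∃ i, α i ≤ f x ∧ f (pt t) ≤ α i + t * β i} with hA
  have hAsub : A ⊆ Set.Icc (0:ℝ) 1 := fun t ht => ht.1
  have hA0 : (0:ℝ) ∈ A := by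
    obtain ⟨i, hi⟩ := hcov' x
    have : f x = α i := by
      have := haff i x hi; simpa [hα] using this
    refine ⟨⟨le_refl 0, zero_le_one⟩, i, le_of_eq this.symm, ?_⟩
    rw [hpt0, ← this]
    simp
  have hAcl : IsClosed A := by
    have : A = ⋃ i, ({t | t ∈ Set.Icc (0:ℝ) 1 ∧ α i ≤ f x ∧ f (pt t) ≤ α i + t * β i}) := by
      ext t; simp only [hA, Set.mem_setOf_eq, Set.mem_iUnion]; tauto
    rw [this]
    refine isClosed_iUnion_of_finite fun i => ?_
    by_cases hc : α i ≤ f x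
    · have : {t | t ∈ Set.Icc (0:ℝ) 1 ∧ α i ≤ f x ∧ f (pt t) ≤ α i + t * β i}
          = Set.Icc (0:ℝ) 1 ∩ {t | f (pt t) ≤ α i + t * β i} := by
        ext t
        simp only [Set.mem_setOf_eq, Set.mem_inter_iff, Set.mem_Icc]
        tauto
      rw [this]
      exact isClosed_Icc.inter (isClosed_le (hf.comp hptcont) (by fun_prop))
    · have : {t | t ∈ Set.Icc (0:ℝ) 1 ∧ α i ≤ f x ∧ f (pt t) ≤ α i + t * β i} = ∅ := by
        ext t; simp [hc]
      rw [this]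
      exact isClosed_empty
  have hAcp : IsCompact A := IsCompact.of_isClosed_subset isCompact_Icc hAcl hAsub
  have hAne : A.Nonempty := ⟨0, hA0⟩
  set T := sSup A with hT
  have hTA : T ∈ A := hAcp.sSup_mem hAne
  have hT0 : 0 ≤ T := (hAsub hTA).1
  have hT1 : T = 1 := by
    by_contra hne
    have hTlt : T < 1 := lt_of_le_of_ne (hAsub hTA).2 hne
    obtain ⟨j, ε, hε, hε1, hsub⟩ := hstep T hT0 hTlt
    obtain ⟨-, i, hi1, hi2⟩ := id hTA
    set sS := T + ε with hsS
    have hTj : T ∈ I j := hsub ⟨le_refl T, by linarith⟩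
    have hSj : sS ∈ I j := hsub ⟨by linarith, le_refl _⟩
    have hgT : f (pt T) = α j + T * β j := hg j T hTj
    have hgS : f (pt sS) = α j + sS * β j := hg j sS hSj
    have hsSA : sS ∈ A := by
      by_cases hcase : f (pt sS) ≤ α i + sS * β i
      · exact ⟨⟨by linarith, hε1⟩, i, hi1, hcase⟩
      · push_neg at hcase
        have h1 : 0 ≤ (α i - α j) + T * (β i - β j) := by
          rw [hgT] at hi2; nlinarith [hi2]
        have h2 : (α i - α j) + sS * (β i - β j) < 0 := by
          rw [hgS] at hcase; nlinarith [hcase]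
        have h0 : 0 ≤ α i - α j :=
          affine_nonneg_at_zero _ _ T sS hT0 (by linarith) h1 h2
        exact ⟨⟨by linarith, hε1⟩, j, by linarith, le_of_eq hgS⟩
    have : sS ≤ T := le_csSup hAcp.bddAbove hsSA
    linarith
  obtain ⟨-, i, hi1, hi2⟩ := id hTA
  rw [hT1] at hi2
  refine ⟨i, hi1, ?_⟩
  have h3 : a i ⬝ᵥ p + c i = α i + 1 * β i := by rw [← hpt1]; exact hφ i 1
  rw [hpt1] at hi2
  linarith

end Key

section DC
variable {m M : ℕ}

/-- Scalar DC decomposition: a continuous function agreeing with affine functions on closed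
convex pieces covering `ℝ^m` is a difference of two max-affine functions. -/
lemma cpwa_scalar_dc (P : Fin M → Set (Fin m → ℝ)) (hPcl : ∀ i, IsClosed (P i))
    (hPcv : ∀ i, Convex ℝ (P i)) (hcov : (⋃ i, P i) = Set.univ)
    (a : Fin M → Fin m → ℝ) (c : Fin M → ℝ) (f : (Fin m → ℝ) → ℝ) (hf : Continuous f)
    (haff : ∀ i, ∀ y ∈ P i, f y = a i ⬝ᵥ y + c i) :
    ∃ G H : (Fin m → ℝ) → ℝ, IsMaxAff G ∧ IsMaxAff H ∧ ∀ x, f x = G x - H x := by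
  classical
  have hcov' : ∀ y : Fin m → ℝ, ∃ i, y ∈ P i := by
    intro y
    have : y ∈ ⋃ i, P i := hcov ▸ Set.mem_univ y
    simpa using this
  set 𝒮 : Finset (Finset (Fin M)) :=
    Finset.univ.filter (fun S => S.Nonempty ∧ ∀ y, ∃ i ∈ S, a i ⬝ᵥ y + c i ≤ f y) with h𝒮
  set Sx : (Fin m → ℝ) → Finset (Fin M) :=
    fun x => Finset.univ.filter (fun i => f x ≤ a i ⬝ᵥ x + c i) with hSxdef
  have hact : ∀ x, ∃ i ∈ Sx x, a i ⬝ᵥ x + c i = f x := by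
    intro x
    obtain ⟨i, hi⟩ := hcov' x
    have hfx : f x = a i ⬝ᵥ x + c i := haff i x hi
    exact ⟨i, by simp [hSxdef, hfx.le], hfx.symm⟩
  have hSx𝒮 : ∀ x, Sx x ∈ 𝒮 := by
    intro x
    rw [h𝒮, Finset.mem_filter]
    refine ⟨Finset.mem_univ _, ?_, ?_⟩
    · obtain ⟨i, hi, -⟩ := hact x
      exact ⟨i, hi⟩
    · intro y
      obtain ⟨i, h1, h2⟩ := key_segment P hPcl hPcv hcov a c f hf haff y x
      exact ⟨i, by simp [hSxdef, h2], h1⟩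
  have h𝒮ne : 𝒮.Nonempty := ⟨Sx 0, hSx𝒮 0⟩
  haveI : Nonempty ↥𝒮 := Finset.nonempty_coe_sort.mpr h𝒮ne
  set sumA : Finset (Fin M) → Fin m → ℝ := fun S => ∑ i ∈ S, a i with hsumA
  set sumC : Finset (Fin M) → ℝ := fun S => ∑ i ∈ S, c i with hsumC
  set B : Finset (Fin M) → (Fin m → ℝ) → ℝ := fun S x =>
    if hS : S.Nonempty then S.sup' hS (fun j => (sumA S - a j) ⬝ᵥ x + (sumC S - c j)) else 0
    with hB
  have hBeq : ∀ (S : Finset (Fin M)) (hS : S.Nonempty) (x),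
      B S x = S.sup' hS (fun j => (sumA S - a j) ⬝ᵥ x + (sumC S - c j)) := by
    intro S hS x
    rw [hB]
    simp [hS]
  have hBmax : ∀ (S : Finset (Fin M)), S.Nonempty → IsMaxAff (B S) := by
    intro S hS
    haveI : Nonempty ↥S := Finset.nonempty_coe_sort.mpr hS
    refine isMaxAff_sup_family (ι := ↥S)
      (fun j => fun x => (sumA S - a j.1) ⬝ᵥ x + (sumC S - c j.1))
      (fun j => isMaxAff_affine _ _) (B S) (fun x => ?_)
    rw [hBeq S hS x]
    constructor
    · obtain ⟨i, hi, hieq⟩ := Finset.exists_mem_eq_sup' hS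
        (fun j => (sumA S - a j) ⬝ᵥ x + (sumC S - c j))
      exact ⟨⟨i, hi⟩, hieq.symm⟩
    · rintro y ⟨j, rfl⟩
      exact Finset.le_sup' (f := fun j => (sumA S - a j) ⬝ᵥ x + (sumC S - c j)) j.2
  set H : (Fin m → ℝ) → ℝ := fun x => ∑ S : ↥𝒮, B S.1 x with hH
  have hHmax : IsMaxAff H := by
    refine isMaxAff_sum_family (fun S : ↥𝒮 => B S.1) (fun S => ?_)
    exact hBmax S.1 (Finset.mem_filter.mp S.2).2.1
  -- pointwise facts
  have fact1 : ∀ S ∈ 𝒮, ∀ x, sumA S ⬝ᵥ x + sumC S - B S x ≤ f x := by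
    intro S hS x
    rw [h𝒮, Finset.mem_filter] at hS
    obtain ⟨-, hSne, hprop⟩ := hS
    obtain ⟨i, hiS, hile⟩ := hprop x
    have h1 : (sumA S - a i) ⬝ᵥ x + (sumC S - c i) ≤ B S x := by
      rw [hBeq S hSne x]
      exact Finset.le_sup' (f := fun j => (sumA S - a j) ⬝ᵥ x + (sumC S - c j)) hiS
    rw [sub_dotProduct] at h1
    linarith
  have fact2 : ∀ x, sumA (Sx x) ⬝ᵥ x + sumC (Sx x) - B (Sx x) x = f x := by
    intro x
    obtain ⟨i0, hi0, hi0eq⟩ := hact x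
    have hSne : (Sx x).Nonempty := ⟨i0, hi0⟩
    have hub : B (Sx x) x ≤ sumA (Sx x) ⬝ᵥ x + sumC (Sx x) - f x := by
      rw [hBeq _ hSne x]
      apply Finset.sup'_le
      intro j hj
      have : f x ≤ a j ⬝ᵥ x + c j := by
        rw [hSxdef] at hj
        simpa using (Finset.mem_filter.mp hj).2
      rw [sub_dotProduct]
      linarith
    have hlb : sumA (Sx x) ⬝ᵥ x + sumC (Sx x) - f x ≤ B (Sx x) x := by
      have h1 : (sumA (Sx x) - a i0) ⬝ᵥ x + (sumC (Sx x) - c i0) ≤ B (Sx x) x := by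
        rw [hBeq _ hSne x]
        exact Finset.le_sup'
          (f := fun j => (sumA (Sx x) - a j) ⬝ᵥ x + (sumC (Sx x) - c j)) hi0
      rw [sub_dotProduct] at h1
      linarith
    linarith
  -- define G
  set G : (Fin m → ℝ) → ℝ := fun x => f x + H x with hG
  have hGmax : IsMaxAff G := by
    refine isMaxAff_sup_family (ι := ↥𝒮)
      (fun S => fun x => (sumA S.1 ⬝ᵥ x + sumC S.1) +
        ∑ S' : ↥𝒮, (if S' = S then 0 else B S'.1 x)) ?_ G ?_
    · intro S
      refine isMaxAff_add (isMaxAff_affine _ _) ?_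
      refine isMaxAff_sum_family _ (fun S' => ?_)
      by_cases h : S' = S
      · refine isMaxAff_congr (g := fun x => (0 : Fin m → ℝ) ⬝ᵥ x + 0) (fun x => by simp [h])
          (isMaxAff_affine _ _)
      · exact isMaxAff_congr (g := B S'.1) (fun x => by simp [h])
          (hBmax S'.1 (Finset.mem_filter.mp S'.2).2.1)
    · intro x
      have hsplit : ∀ S : ↥𝒮, ∑ S' : ↥𝒮, (if S' = S then 0 else B S'.1 x) = H x - B S.1 x := by
        intro S
        have e2 : H x = B S.1 x + ∑ S' ∈ Finset.univ.erase S, B S'.1 x :=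
          (Finset.add_sum_erase _ _ (Finset.mem_univ S)).symm
        have e1 : ∑ S' : ↥𝒮, (if S' = S then 0 else B S'.1 x)
            = (if S = S then 0 else B S.1 x) + ∑ S' ∈ Finset.univ.erase S,
                (if S' = S then 0 else B S'.1 x) :=
          (Finset.add_sum_erase _ _ (Finset.mem_univ S)).symm
        rw [e1, if_pos rfl, zero_add, e2]
        rw [Finset.sum_congr rfl (fun S' hS' => if_neg (Finset.ne_of_mem_erase hS'))]
        ring
      constructor
      · refine ⟨⟨Sx x, hSx𝒮 x⟩, ?_⟩
        show sumA (Sx x) ⬝ᵥ x + sumC (Sx x) + ∑ S' : ↥𝒮, _ = G x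
        rw [hsplit ⟨Sx x, hSx𝒮 x⟩, hG]
        have := fact2 x
        simp only
        linarith
      · rintro y ⟨S, rfl⟩
        show sumA S.1 ⬝ᵥ x + sumC S.1 + ∑ S' : ↥𝒮, _ ≤ G x
        rw [hsplit S, hG]
        have := fact1 S.1 S.2 x
        simp only
        linarith
  exact ⟨G, H, hGmax, hHmax, fun x => by rw [hG]; ring⟩

end DC

section Assembly


lemma pad_surj {k K : ℕ} (hK : k + 1 ≤ K) :
    Function.Surjective (fun i : Fin K =>
      if h : (i:ℕ) < k + 1 then (⟨i.1, h⟩ : Fin (k+1)) else ⟨0, Nat.succ_pos _⟩) := by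
  intro t
  refine ⟨⟨t.1, lt_of_lt_of_le t.2 hK⟩, ?_⟩
  simp only [t.2, dif_pos]

theorem cpwa_is_linear_map_of_mpLP_solution' (m n : ℕ)
    (f : (Fin m → ℝ) → (Fin n → ℝ)) (hf : IsCPWAVec f) :
    ∃ (nh : ℕ), nh ≤ 2 * n ∧
      ∃ (c : Fin nh → ℝ) (k : ℕ) (P : Fin k → Fin nh → ℝ) (Q : Fin k → Fin m → ℝ)
        (r : Fin k → ℝ) (T : Matrix (Fin n) (Fin nh) ℝ)
        (fhat : (Fin m → ℝ) → (Fin nh → ℝ)),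
        ∀ x : Fin m → ℝ,
          (∀ i, P i ⬝ᵥ fhat x + Q i ⬝ᵥ x ≤ r i) ∧
          (∀ z : Fin nh → ℝ, (∀ i, P i ⬝ᵥ z + Q i ⬝ᵥ x ≤ r i) → c ⬝ᵥ fhat x ≤ c ⬝ᵥ z) ∧
          (∀ z : Fin nh → ℝ, (∀ i, P i ⬝ᵥ z + Q i ⬝ᵥ x ≤ r i) →
            c ⬝ᵥ z = c ⬝ᵥ fhat x → z = fhat x) ∧
          f x = T.mulVec (fhat x) := by
  classical
  obtain ⟨hfc, M, Pc, hPpoly, hcov, haffs⟩ := hf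
  choose A d hAd using haffs
  -- scalar DC decomposition for each coordinate
  have hdc : ∀ j : Fin n, ∃ G H : (Fin m → ℝ) → ℝ,
      IsMaxAff G ∧ IsMaxAff H ∧ ∀ x, f x j = G x - H x := by
    intro j
    refine cpwa_scalar_dc Pc (fun i => (hPpoly i).isClosed) (fun i => (hPpoly i).convex) hcov
      (fun i => fun l => A i j l) (fun i => d i j) (fun x => f x j)
      ((continuous_apply j).comp hfc) ?_
    intro i y hy
    have := hAd i y hy
    have h2 : f y j = ((A i).mulVec y + d i) j := by rw [this]
    simpa [Matrix.mulVec, dotProduct] using h2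
  choose G H hGmax hHmax heq using hdc
  -- the 2n coordinate functions
  set φ : Fin (2*n) → (Fin m → ℝ) → ℝ := fun w =>
    if h : (w:ℕ) < n then G ⟨w, h⟩ else H ⟨(w:ℕ) - n, by omega⟩ with hφ
  have hφmax : ∀ w, IsMaxAff (φ w) := by
    intro w
    rw [hφ]
    by_cases h : (w:ℕ) < n
    · simpa [h] using hGmax ⟨w, h⟩
    · simpa [h] using hHmax ⟨(w:ℕ) - n, by omega⟩
  have hφG : ∀ (j : Fin n) (h : (j:ℕ) < 2*n), φ ⟨j, h⟩ = G j := by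
    intro j h
    simp only [hφ]
    rw [dif_pos (show ((⟨(j:ℕ), h⟩ : Fin (2*n)):ℕ) < n from j.2)]
  have hφH : ∀ (j : Fin n) (h : n + (j:ℕ) < 2*n), φ ⟨n + (j:ℕ), h⟩ = H j := by
    intro j h
    simp only [hφ]
    rw [dif_neg (show ¬ ((⟨n + (j:ℕ), h⟩ : Fin (2*n)):ℕ) < n by simp)]
    exact congrArg H (Fin.ext (by simp))
  choose kk aa bb hrep using hφmax
  set K : ℕ := (Finset.univ.sup kk) + 1 with hK
  have hKw : ∀ w, kk w + 1 ≤ K := fun w =>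
    Nat.succ_le_succ (Finset.le_sup (Finset.mem_univ w))
  set pad : ∀ w : Fin (2*n), Fin K → Fin (kk w + 1) := fun w i =>
    if h : (i:ℕ) < kk w + 1 then ⟨i.1, h⟩ else ⟨0, Nat.succ_pos _⟩ with hpad
  set a' : ∀ _ : Fin (2*n), Fin K → Fin m → ℝ := fun w i => aa w (pad w i) with ha'
  set b' : ∀ _ : Fin (2*n), Fin K → ℝ := fun w i => bb w (pad w i) with hb'
  have hrep' : ∀ w x, IsGreatest (Set.range fun i : Fin K => a' w i ⬝ᵥ x + b' w i) (φ w x) := by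
    intro w x
    have hs : (Set.range fun i : Fin K => a' w i ⬝ᵥ x + b' w i)
        = Set.range fun t : Fin (kk w + 1) => aa w t ⬝ᵥ x + bb w t :=
      Function.Surjective.range_comp (pad_surj (hKw w))
        (fun t : Fin (kk w + 1) => aa w t ⬝ᵥ x + bb w t)
    rw [hs]
    exact hrep w x
  -- set up the LP data
  set enc : Fin (2*n) × Fin K ≃ Fin ((2*n) * K) := finProdFinEquiv with henc
  refine ⟨2*n, le_refl _, (fun _ => 1), (2*n)*K,
    (fun idx w' => if w' = (enc.symm idx).1 then -1 else 0),
    (fun idx => a' (enc.symm idx).1 (enc.symm idx).2),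
    (fun idx => -(b' (enc.symm idx).1 (enc.symm idx).2)),
    (fun j w => (if (w:ℕ) = (j:ℕ) then 1 else 0) - (if (w:ℕ) = n + (j:ℕ) then 1 else 0)),
    (fun x w => φ w x), fun x => ?_⟩
  have hPdot : ∀ (idx : Fin ((2*n)*K)) (z : Fin (2*n) → ℝ),
      (fun w' => if w' = (enc.symm idx).1 then (-1:ℝ) else 0) ⬝ᵥ z = -(z (enc.symm idx).1) := by
    intro idx z
    simp [dotProduct, ite_mul, Finset.sum_ite_eq']
  have hones : ∀ v : Fin (2*n) → ℝ, (fun _ : Fin (2*n) => (1:ℝ)) ⬝ᵥ v = ∑ w, v w := by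
    intro v; simp [dotProduct]
  have hfeas : ∀ idx, (fun w' => if w' = (enc.symm idx).1 then (-1:ℝ) else 0) ⬝ᵥ (fun w => φ w x)
      + a' (enc.symm idx).1 (enc.symm idx).2 ⬝ᵥ x ≤ -(b' (enc.symm idx).1 (enc.symm idx).2) := by
    intro idx
    rw [hPdot]
    have := (hrep' (enc.symm idx).1 x).2 ⟨(enc.symm idx).2, rfl⟩
    simp only at this
    linarith
  have hopt : ∀ z : Fin (2*n) → ℝ,
      (∀ idx, (fun w' => if w' = (enc.symm idx).1 then (-1:ℝ) else 0) ⬝ᵥ z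
        + a' (enc.symm idx).1 (enc.symm idx).2 ⬝ᵥ x
          ≤ -(b' (enc.symm idx).1 (enc.symm idx).2)) →
      ∀ w, φ w x ≤ z w := by
    intro z hz w
    obtain ⟨i, hi⟩ := (hrep' w x).1
    have h2 := hz (enc (w, i))
    rw [hPdot] at h2
    rw [Equiv.symm_apply_apply] at h2
    simp only at h2 hi
    linarith
  refine ⟨hfeas, ?_, ?_, ?_⟩
  · intro z hz
    rw [hones, hones]
    exact Finset.sum_le_sum fun w _ => hopt z hz w
  · intro z hz hsum
    rw [hones, hones] at hsum
    have hzero : ∑ w, (z w - φ w x) = 0 := by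
      rw [Finset.sum_sub_distrib, hsum]
      ring
    have hterm := (Finset.sum_eq_zero_iff_of_nonneg
      (fun w _ => sub_nonneg.mpr (hopt z hz w))).mp hzero
    funext w
    have := hterm w (Finset.mem_univ w)
    linarith [sub_eq_zero.mp this]
  · funext j
    have hj2n : (j:ℕ) < 2*n := by omega
    have hnj2n : n + (j:ℕ) < 2*n := by omega
    set wj : Fin (2*n) := ⟨j, hj2n⟩ with hwj
    set wnj : Fin (2*n) := ⟨n + j, hnj2n⟩ with hwnj
    have hmv : (Matrix.mulVec ((fun j w => (if (w:ℕ) = (j:ℕ) then (1:ℝ) else 0)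
        - (if (w:ℕ) = n + (j:ℕ) then 1 else 0)) : Matrix (Fin n) (Fin (2*n)) ℝ)
        (fun w => φ w x)) j
        = φ wj x - φ wnj x := by
      show ∑ w : Fin (2*n), ((if (w:ℕ) = (j:ℕ) then (1:ℝ) else 0)
        - (if (w:ℕ) = n + (j:ℕ) then 1 else 0)) * φ w x = _
      have hcond1 : ∀ w : Fin (2*n), ((w:ℕ) = (j:ℕ)) = (w = wj) := by
        intro w; rw [hwj]; simp [Fin.ext_iff]
      have hcond2 : ∀ w : Fin (2*n), ((w:ℕ) = n + (j:ℕ)) = (w = wnj) := by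
        intro w; rw [hwnj]; simp [Fin.ext_iff]
      simp only [hcond1, hcond2, sub_mul, ite_mul, one_mul, zero_mul]
      rw [Finset.sum_sub_distrib]
      rw [Finset.sum_ite_eq' Finset.univ wj (fun w => φ w x)]
      rw [Finset.sum_ite_eq' Finset.univ wnj (fun w => φ w x)]
      simp
    rw [hmv]
    have h1 : φ wj x = G j x := congrFun (hφG j hj2n) x
    have h2 : φ wnj x = H j x := congrFun (hφH j hnj2n) x
    rw [h1, h2]
    exact heq j x

end Assembly

/-- Every continuous piecewise affine `f : ℝ^m → ℝ^n` is a linear map of the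
unique solution of a multiparametric linear program: there are a dimension `n̂ ≤ 2n`, a linear
objective `z ↦ c ⬝ z`, a polyhedral set `Ω ⊆ ℝ^{n̂} × ℝ^m` given by finitely many affine
inequalities `P_i ⬝ z + Q_i ⬝ x ≤ r_i` in `(z,x)`, and a linear map `T` such that for every
parameter `x` the minimizer `f̂(x) = argmin_{z : (z,x) ∈ Ω} c ⬝ z` exists and is unique, and
`f(x) = T f̂(x)`. -/
theorem cpwa_is_linear_map_of_mpLP_solution (m n : ℕ)
    (f : (Fin m → ℝ) → (Fin n → ℝ)) (hf : IsCPWAVec f) :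
    ∃ (nh : ℕ), nh ≤ 2 * n ∧
      ∃ (c : Fin nh → ℝ) (k : ℕ) (P : Fin k → Fin nh → ℝ) (Q : Fin k → Fin m → ℝ)
        (r : Fin k → ℝ) (T : Matrix (Fin n) (Fin nh) ℝ)
        (fhat : (Fin m → ℝ) → (Fin nh → ℝ)),
        ∀ x : Fin m → ℝ,
          (∀ i, P i ⬝ᵥ fhat x + Q i ⬝ᵥ x ≤ r i) ∧
          (∀ z : Fin nh → ℝ, (∀ i, P i ⬝ᵥ z + Q i ⬝ᵥ x ≤ r i) → c ⬝ᵥ fhat x ≤ c ⬝ᵥ z) ∧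
          (∀ z : Fin nh → ℝ, (∀ i, P i ⬝ᵥ z + Q i ⬝ᵥ x ≤ r i) →
            c ⬝ᵥ z = c ⬝ᵥ fhat x → z = fhat x) ∧
          f x = T.mulVec (fhat x) := by
  exact cpwa_is_linear_map_of_mpLP_solution' m n f hf
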